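/- Let k be an algebraically closed field of characteristic 2, P = ⟨x⟩ × ⟨y⟩ ≅ C_2 × C_2, and E = ⟨r⟩ ≅ C_3 the subgroup of Aut(P) with r·x = xy and r·y = x (so P⋊E ≅ A_4). Let D_x be the derivation of kP with D_x(x) = 1 + y and D_x(y) = 1 + xy, and let D_y be the derivation with D_y(x) = 1 + xy and D_y(y) = 1 + x. Then D_x and D_y are E-fixed, the set {D_x, D_y} is a k-basis of Der_k(kP)^E, and [D_x, D_y] = 0; in particular Der_k(kP)^E is a 2-dimensional abelian Lie algebra. -/

import Mathlib

open MonoidAlgebra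

namespace KleinAux
set_option linter.unusedSectionVars false

abbrev Pg := Multiplicative (ZMod 2 × ZMod 2)
abbrev Xg : Pg := Multiplicative.ofAdd ((1 : ZMod 2), (0 : ZMod 2))
abbrev Yg : Pg := Multiplicative.ofAdd ((0 : ZMod 2), (1 : ZMod 2))
abbrev Zg : Pg := Multiplicative.ofAdd ((1 : ZMod 2), (1 : ZMod 2))

lemma cases4 : ∀ g : Pg, g = 1 ∨ g = Xg ∨ g = Yg ∨ g = Zg := by decide

variable {k : Type*} [Field k] [CharP k 2]

lemma appAdd (f g : MonoidAlgebra k Pg) (x : Pg) : (f + g).coeff x = f.coeff x + g.coeff x := rfl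
lemma appSmul (c : k) (f : MonoidAlgebra k Pg) (x : Pg) : (c • f).coeff x = c * f.coeff x := rfl
lemma appZero (x : Pg) : (0 : MonoidAlgebra k Pg).coeff x = 0 := rfl

lemma congrApp {f g : MonoidAlgebra k Pg} (h : f = g) (x : Pg) : f.coeff x = g.coeff x := by rw [h]

lemma two_zero (k : Type*) [Field k] [CharP k 2] : (2 : MonoidAlgebra k Pg) = 0 := by
  have h : ((2:ℕ) : MonoidAlgebra k Pg) = 0 := by
    rw [show ((2:ℕ) : MonoidAlgebra k Pg) = algebraMap k _ ((2:ℕ):k) by push_cast; rfl]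
    rw [CharP.cast_eq_zero k 2, map_zero]
  simpa using h

lemma expand4 (f : MonoidAlgebra k Pg) :
    f = MonoidAlgebra.single 1 (f.coeff 1) + MonoidAlgebra.single Xg (f.coeff Xg) +
        MonoidAlgebra.single Yg (f.coeff Yg) + MonoidAlgebra.single Zg (f.coeff Zg) := by
  ext g
  rcases cases4 g with h | h | h | h <;> subst h <;>
    simp [appAdd, MonoidAlgebra.single_apply,
      show (1:Pg) ≠ Xg from by decide, show (1:Pg) ≠ Yg from by decide,
      show (1:Pg) ≠ Zg from by decide, show Xg ≠ Yg from by decide,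
      show Xg ≠ Zg from by decide, show Yg ≠ Zg from by decide,
      show Xg ≠ (1:Pg) from by decide, show Yg ≠ (1:Pg) from by decide,
      show Zg ≠ (1:Pg) from by decide, show Yg ≠ Xg from by decide,
      show Zg ≠ Xg from by decide, show Zg ≠ Yg from by decide]

/-- two derivations agreeing on `of Xg` and `of Yg` are equal -/
lemma derivation_ext {D1 D2 : Derivation k (MonoidAlgebra k Pg) (MonoidAlgebra k Pg)}
    (h1 : D1 (of k Pg Xg) = D2 (of k Pg Xg)) (h2 : D1 (of k Pg Yg) = D2 (of k Pg Yg)) :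
    D1 = D2 := by
  have key : ∀ g : Pg, D1 (of k Pg g) = D2 (of k Pg g) := by
    intro g
    rcases cases4 g with h | h | h | h <;> subst h
    · rw [show of k Pg (1:Pg) = (1 : MonoidAlgebra k Pg) from map_one _]
      rw [Derivation.map_one_eq_zero, Derivation.map_one_eq_zero]
    · exact h1
    · exact h2
    · have hz : of k Pg Zg = of k Pg Xg * of k Pg Yg := by
        rw [← map_mul]; norm_num [show Xg * Yg = Zg from by decide]
      rw [hz, Derivation.leibniz, Derivation.leibniz, h1, h2]
  have hlin : (D1 : MonoidAlgebra k Pg →ₗ[k] MonoidAlgebra k Pg) = D2 := by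
    apply MonoidAlgebra.lhom_ext'
    intro g
    apply LinearMap.ext
    intro c
    have hs : (MonoidAlgebra.single g c : MonoidAlgebra k Pg) = c • of k Pg g := by
      simp [MonoidAlgebra.of_apply, MonoidAlgebra.smul_single']
    simp only [LinearMap.comp_apply, lsingle_apply, hs, map_smul]
    rw [show (D1 : MonoidAlgebra k Pg →ₗ[k] MonoidAlgebra k Pg) (of k Pg g) = D1 (of k Pg g) from rfl,
        show (D2 : MonoidAlgebra k Pg →ₗ[k] MonoidAlgebra k Pg) (of k Pg g) = D2 (of k Pg g) from rfl,
        key g]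
  exact Derivation.ext fun a => DFunLike.congr_fun hlin a

/-- fixedness can be checked on the `of g` -/
lemma fixed_of {r : MulAut Pg} {D : Derivation k (MonoidAlgebra k Pg) (MonoidAlgebra k Pg)}
    (h : ∀ g : Pg, MonoidAlgebra.domCongr k k r (D (of k Pg (r.symm g))) = D (of k Pg g)) :
    ∀ a, MonoidAlgebra.domCongr k k r (D ((MonoidAlgebra.domCongr k k r).symm a)) = D a := by
  have hlin : ((MonoidAlgebra.domCongr k k r) : MonoidAlgebra k Pg ≃ₐ[k] MonoidAlgebra k Pg).toLinearMap ∘ₗ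
      (D : MonoidAlgebra k Pg →ₗ[k] MonoidAlgebra k Pg) ∘ₗ
      ((MonoidAlgebra.domCongr k k r).symm : MonoidAlgebra k Pg ≃ₐ[k] MonoidAlgebra k Pg).toLinearMap
      = (D : MonoidAlgebra k Pg →ₗ[k] MonoidAlgebra k Pg) := by
    apply MonoidAlgebra.lhom_ext'
    intro g
    apply LinearMap.ext
    intro c
    have hs : (MonoidAlgebra.single g c : MonoidAlgebra k Pg) = c • of k Pg g := by
      simp [MonoidAlgebra.of_apply, MonoidAlgebra.smul_single']
    have hsymm : ((MonoidAlgebra.domCongr k k r).symm : MonoidAlgebra k Pg ≃ₐ[k] MonoidAlgebra k Pg)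
        (of k Pg g) = of k Pg (r.symm g) := by
      rw [MonoidAlgebra.domCongr_symm]
      simp [MonoidAlgebra.of_apply]
    simp only [LinearMap.comp_apply, lsingle_apply, hs, map_smul, AlgEquiv.toLinearMap_apply]
    rw [hsymm]
    rw [show (D : MonoidAlgebra k Pg →ₗ[k] MonoidAlgebra k Pg) (of k Pg (r.symm g))
      = D (of k Pg (r.symm g)) from rfl,
      show (D : MonoidAlgebra k Pg →ₗ[k] MonoidAlgebra k Pg) (of k Pg g) = D (of k Pg g) from rfl,
      h g]
  intro a
  exact DFunLike.congr_fun hlin a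

end KleinAux

open KleinAux in
set_option maxHeartbeats 1000000 in
theorem kleinFour_fixed_derivations_abelian
    (k : Type*) [Field k] [CharP k 2] [IsAlgClosed k]
    (r : MulAut (Multiplicative (ZMod 2 × ZMod 2)))
    (hrx : r (Multiplicative.ofAdd ((1 : ZMod 2), (0 : ZMod 2))) =
      Multiplicative.ofAdd ((1 : ZMod 2), (0 : ZMod 2)) *
        Multiplicative.ofAdd ((0 : ZMod 2), (1 : ZMod 2)))
    (hry : r (Multiplicative.ofAdd ((0 : ZMod 2), (1 : ZMod 2))) =
      Multiplicative.ofAdd ((1 : ZMod 2), (0 : ZMod 2)))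
    (Dx Dy : Derivation k (MonoidAlgebra k (Multiplicative (ZMod 2 × ZMod 2)))
      (MonoidAlgebra k (Multiplicative (ZMod 2 × ZMod 2))))
    (hDxx : Dx (MonoidAlgebra.of k _ (Multiplicative.ofAdd ((1 : ZMod 2), (0 : ZMod 2)))) =
      1 + MonoidAlgebra.of k _ (Multiplicative.ofAdd ((0 : ZMod 2), (1 : ZMod 2))))
    (hDxy : Dx (MonoidAlgebra.of k _ (Multiplicative.ofAdd ((0 : ZMod 2), (1 : ZMod 2)))) =
      1 + MonoidAlgebra.of k _ (Multiplicative.ofAdd ((1 : ZMod 2), (0 : ZMod 2))) *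
        MonoidAlgebra.of k _ (Multiplicative.ofAdd ((0 : ZMod 2), (1 : ZMod 2))))
    (hDyx : Dy (MonoidAlgebra.of k _ (Multiplicative.ofAdd ((1 : ZMod 2), (0 : ZMod 2)))) =
      1 + MonoidAlgebra.of k _ (Multiplicative.ofAdd ((1 : ZMod 2), (0 : ZMod 2))) *
        MonoidAlgebra.of k _ (Multiplicative.ofAdd ((0 : ZMod 2), (1 : ZMod 2))))
    (hDyy : Dy (MonoidAlgebra.of k _ (Multiplicative.ofAdd ((0 : ZMod 2), (1 : ZMod 2)))) =
      1 + MonoidAlgebra.of k _ (Multiplicative.ofAdd ((1 : ZMod 2), (0 : ZMod 2)))) :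
    (∀ a, MonoidAlgebra.domCongr k k r (Dx ((MonoidAlgebra.domCongr k k r).symm a)) = Dx a) ∧
    (∀ a, MonoidAlgebra.domCongr k k r (Dy ((MonoidAlgebra.domCongr k k r).symm a)) = Dy a) ∧
    LinearIndependent k ![Dx, Dy] ∧
    (Submodule.span k {Dx, Dy} : Set _) =
      {D : Derivation k (MonoidAlgebra k (Multiplicative (ZMod 2 × ZMod 2)))
          (MonoidAlgebra k (Multiplicative (ZMod 2 × ZMod 2))) |
        ∀ a, MonoidAlgebra.domCongr k k r (D ((MonoidAlgebra.domCongr k k r).symm a)) = D a} ∧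
    ⁅Dx, Dy⁆ = 0 := by
  classical
  -- group facts
  have hXY : Xg * Yg = Zg := by decide
  have hrX : r Xg = Zg := hrx.trans (by decide)
  have hrY : r Yg = Xg := hry
  have hrZ : r Zg = Yg := by rw [← hXY, map_mul, hrX, hrY]; decide
  have hsX : r.symm Xg = Yg := by rw [← hrY, MulEquiv.symm_apply_apply]
  have hsY : r.symm Yg = Zg := by rw [← hrZ, MulEquiv.symm_apply_apply]
  have hsZ : r.symm Zg = Xg := by rw [← hrX, MulEquiv.symm_apply_apply]
  -- algebra products
  have hoXY : of k Pg Xg * of k Pg Yg = of k Pg Zg := by rw [← map_mul, hXY]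
  have hoXX : of k Pg Xg * of k Pg Xg = 1 := by
    rw [← map_mul, show Xg * Xg = 1 from by decide, map_one]
  have hoYY : of k Pg Yg * of k Pg Yg = 1 := by
    rw [← map_mul, show Yg * Yg = 1 from by decide, map_one]
  have hoXZ : of k Pg Xg * of k Pg Zg = of k Pg Yg := by
    rw [← map_mul, show Xg * Zg = Yg from by decide]
  have hoYZ : of k Pg Yg * of k Pg Zg = of k Pg Xg := by
    rw [← map_mul, show Yg * Zg = Xg from by decide]
  have h2 : (2 : MonoidAlgebra k Pg) = 0 := two_zero k
  -- derivation values on the four group elements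
  have hDxy' : Dx (of k Pg Yg) = 1 + of k Pg Zg := by rw [hDxy, hoXY]
  have hDyx' : Dy (of k Pg Xg) = 1 + of k Pg Zg := by rw [hDyx, hoXY]
  have hDxz : Dx (of k Pg Zg) = 1 + of k Pg Xg := by
    rw [show of k Pg Zg = of k Pg Xg * of k Pg Yg from hoXY.symm, Derivation.leibniz,
      smul_eq_mul, smul_eq_mul, hDxy', hDxx]
    linear_combination hoXZ + hoYY + of k Pg Yg * h2
  have hDyz : Dy (of k Pg Zg) = 1 + of k Pg Yg := by
    rw [show of k Pg Zg = of k Pg Xg * of k Pg Yg from hoXY.symm, Derivation.leibniz,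
      smul_eq_mul, smul_eq_mul, hDyy, hDyx']
    linear_combination hoXX + hoYZ + of k Pg Xg * h2
  -- domCongr action on group-like elements
  have hdc : ∀ g : Pg, MonoidAlgebra.domCongr k k r (of k Pg g) = of k Pg (r g) := by
    intro g; simp [MonoidAlgebra.of_apply]
  -- Part 1 : Dx is fixed
  have fixDx : ∀ a, MonoidAlgebra.domCongr k k r (Dx ((MonoidAlgebra.domCongr k k r).symm a))
      = Dx a := by
    apply fixed_of
    intro g
    rcases cases4 g with h | h | h | h <;> subst h
    · rw [show r.symm (1:Pg) = 1 from map_one _, show of k Pg (1:Pg) = 1 from map_one _,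
        Derivation.map_one_eq_zero, map_zero]
    · rw [hsX, hDxy', map_add, map_one, hdc, hrZ, hDxx]
    · rw [hsY, hDxz, map_add, map_one, hdc, hrX, hDxy']
    · rw [hsZ, hDxx, map_add, map_one, hdc, hrY, hDxz]
  -- Part 2 : Dy is fixed
  have fixDy : ∀ a, MonoidAlgebra.domCongr k k r (Dy ((MonoidAlgebra.domCongr k k r).symm a))
      = Dy a := by
    apply fixed_of
    intro g
    rcases cases4 g with h | h | h | h <;> subst h
    · rw [show r.symm (1:Pg) = 1 from map_one _, show of k Pg (1:Pg) = 1 from map_one _,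
        Derivation.map_one_eq_zero, map_zero]
    · rw [hsX, hDyy, map_add, map_one, hdc, hrX, hDyx']
    · rw [hsY, hDyz, map_add, map_one, hdc, hrY, hDyy]
    · rw [hsZ, hDyx', map_add, map_one, hdc, hrZ, hDyz]
  refine ⟨fixDx, fixDy, ?_, ?_, ?_⟩
  · -- linear independence
    rw [LinearIndependent.pair_iff]
    intro s t hst
    have h := DFunLike.congr_fun hst (of k Pg Xg)
    rw [Derivation.add_apply, Derivation.smul_apply, Derivation.smul_apply,
      Derivation.zero_apply, hDxx, hDyx'] at h
    constructor
    · have hc := congrApp h Yg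
      simpa [appAdd, appSmul, appZero, MonoidAlgebra.one_def, MonoidAlgebra.of_apply,
        MonoidAlgebra.single_apply, show (1:Pg) ≠ Yg from by decide,
        show Zg ≠ Yg from by decide] using hc
    · have hc := congrApp h Zg
      simpa [appAdd, appSmul, appZero, MonoidAlgebra.one_def, MonoidAlgebra.of_apply,
        MonoidAlgebra.single_apply, show (1:Pg) ≠ Zg from by decide,
        show Yg ≠ Zg from by decide] using hc
  · -- span equality
    have hsymmO : ∀ g : Pg, (MonoidAlgebra.domCongr k k r).symm (of k Pg g)
        = of k Pg (r.symm g) := by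
      intro g; rw [MonoidAlgebra.domCongr_symm]; simp [MonoidAlgebra.of_apply]
    apply Set.Subset.antisymm
    · -- span ⊆ fixed set
      intro D hD
      have hD' : D ∈ Submodule.span k {Dx, Dy} := hD
      clear hD
      simp only [Set.mem_setOf_eq]
      induction hD' using Submodule.span_induction with
      | mem E hE =>
        rcases Set.mem_insert_iff.mp hE with h | h
        · subst h; exact fixDx
        · rw [Set.mem_singleton_iff.mp h]; exact fixDy
      | zero => intro a; rw [Derivation.zero_apply, Derivation.zero_apply, map_zero]
      | add f g _ _ hf hg =>
        intro a
        rw [Derivation.add_apply, Derivation.add_apply, map_add, hf a, hg a]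
      | smul c f _ hf =>
        intro a
        rw [Derivation.smul_apply, Derivation.smul_apply, map_smul, hf a]
    · -- fixed set ⊆ span
      intro D hD
      have hD' : ∀ a, MonoidAlgebra.domCongr k k r (D ((MonoidAlgebra.domCongr k k r).symm a))
          = D a := hD
      have hx0 := hD' (of k Pg Xg)
      rw [hsymmO, hsX] at hx0
      have hz0 := hD' (of k Pg Zg)
      rw [hsymmO, hsZ] at hz0
      have hv : D (of k Pg Yg) = (MonoidAlgebra.domCongr k k r).symm (D (of k Pg Xg)) := by
        rw [← hx0, AlgEquiv.symm_apply_apply]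
      have hleib : D (of k Pg Zg)
          = of k Pg Xg * D (of k Pg Yg) + of k Pg Yg * D (of k Pg Xg) := by
        rw [← hoXY, Derivation.leibniz, smul_eq_mul, smul_eq_mul]
      set u := D (of k Pg Xg) with hu_def
      have star : MonoidAlgebra.domCongr k k r u
          = MonoidAlgebra.single Xg 1 * ((MonoidAlgebra.domCongr k k r).symm u)
            + MonoidAlgebra.single Yg 1 * u := by
        rw [show (MonoidAlgebra.single Xg 1 : MonoidAlgebra k Pg) = of k Pg Xg from rfl,
          show (MonoidAlgebra.single Yg 1 : MonoidAlgebra k Pg) = of k Pg Yg from rfl,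
          ← hv, ← hleib, hz0]
      -- the symm-image coefficients
      have hsymmc : ∀ g : Pg, ((MonoidAlgebra.domCongr k k r).symm u).coeff g = u.coeff (r g) := by
        intro g
        rw [MonoidAlgebra.domCongr_symm, MonoidAlgebra.domCongr_apply, MulEquiv.symm_symm]
      have hdcc : ∀ g : Pg, (MonoidAlgebra.domCongr k k r u).coeff g = u.coeff (r.symm g) := by
        intro g; rw [MonoidAlgebra.domCongr_apply]
      -- coefficient equations
      have e1 := congrApp star (1:Pg)
      rw [appAdd, hdcc, show r.symm (1:Pg) = 1 from map_one _,
        MonoidAlgebra.coeff_single_mul_eq_mul_coeff _ (fun a _ => (show ∀ a : Pg, Xg * a = 1 ↔ a = Xg from by decide) a),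
        MonoidAlgebra.coeff_single_mul_eq_mul_coeff _ (fun a _ => (show ∀ a : Pg, Yg * a = 1 ↔ a = Yg from by decide) a),
        hsymmc, hrX, one_mul, one_mul] at e1
      -- e1 : u 1 = u Zg + u Yg
      have eX := congrApp star Xg
      rw [appAdd, hdcc, hsX,
        MonoidAlgebra.coeff_single_mul_eq_mul_coeff _ (fun a _ => (show ∀ a : Pg, Xg * a = Xg ↔ a = 1 from by decide) a),
        MonoidAlgebra.coeff_single_mul_eq_mul_coeff _ (fun a _ => (show ∀ a : Pg, Yg * a = Xg ↔ a = Zg from by decide) a),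
        hsymmc, show r (1:Pg) = 1 from map_one _, one_mul, one_mul] at eX
      -- eX : u Yg = u 1 + u Zg
      have eZ := congrApp star Zg
      rw [appAdd, hdcc, hsZ,
        MonoidAlgebra.coeff_single_mul_eq_mul_coeff _ (fun a _ => (show ∀ a : Pg, Xg * a = Zg ↔ a = Yg from by decide) a),
        MonoidAlgebra.coeff_single_mul_eq_mul_coeff _ (fun a _ => (show ∀ a : Pg, Yg * a = Zg ↔ a = Xg from by decide) a),
        hsymmc, hrY, one_mul] at eZ
      -- eZ : u Xg = u Xg + u Xg
      have hbeta : u.coeff Xg = 0 := by linear_combination -eZ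
      -- now conclude D = (u Yg) • Dx + (u Zg) • Dy
      have hu := expand4 u
      rw [hbeta, MonoidAlgebra.single_zero, add_zero] at hu
      have hfin : D = (u.coeff Yg) • Dx + (u.coeff Zg) • Dy := by
        apply derivation_ext
        · rw [Derivation.add_apply, Derivation.smul_apply, Derivation.smul_apply, hDxx, hDyx']
          conv_lhs => rw [← hu_def, hu, e1]
          rw [show (1 : MonoidAlgebra k Pg) = MonoidAlgebra.single 1 1 from rfl,
            show of k Pg Yg = MonoidAlgebra.single Yg 1 from rfl,
            show of k Pg Zg = MonoidAlgebra.single Zg 1 from rfl]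
          rw [smul_add, smul_add, MonoidAlgebra.smul_single', MonoidAlgebra.smul_single',
            MonoidAlgebra.smul_single', MonoidAlgebra.smul_single']
          simp only [mul_one]
          rw [MonoidAlgebra.single_add]
          abel
        · rw [Derivation.add_apply, Derivation.smul_apply, Derivation.smul_apply, hDxy', hDyy]
          conv_lhs => rw [hv, hu, map_add, map_add, MonoidAlgebra.domCongr_symm,
            MonoidAlgebra.domCongr_single, MonoidAlgebra.domCongr_single,
            MonoidAlgebra.domCongr_single, show r.symm (1:Pg) = 1 from map_one _, hsY, hsZ, e1]
          rw [show (1 : MonoidAlgebra k Pg) = MonoidAlgebra.single 1 1 from rfl,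
            show of k Pg Xg = MonoidAlgebra.single Xg 1 from rfl,
            show of k Pg Zg = MonoidAlgebra.single Zg 1 from rfl]
          rw [smul_add, smul_add, MonoidAlgebra.smul_single', MonoidAlgebra.smul_single',
            MonoidAlgebra.smul_single', MonoidAlgebra.smul_single']
          simp only [mul_one]
          rw [MonoidAlgebra.single_add]
          abel
      rw [hfin]
      exact Submodule.add_mem _
        (Submodule.smul_mem _ _ (Submodule.subset_span (Set.mem_insert _ _)))
        (Submodule.smul_mem _ _ (Submodule.subset_span (Set.mem_insert_of_mem _ rfl)))
  · -- bracket vanishes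
    apply derivation_ext (D2 := 0)
    · rw [Derivation.commutator_apply, hDyx', hDxx, map_add, map_add,
        Derivation.map_one_eq_zero, Derivation.map_one_eq_zero, hDxz, hDyy,
        Derivation.zero_apply]
      abel
    · rw [Derivation.commutator_apply, hDyy, hDxy', map_add, map_add,
        Derivation.map_one_eq_zero, Derivation.map_one_eq_zero, hDxx, hDyz,
        Derivation.zero_apply]
      abel
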